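/- Let 𝒫 = (P, Γ, Δ, Δ_c) be a self-modifying pushdown system in which every rule of Δ has the form ⟨p,γ⟩ ↪ ⟨p',w⟩ with |w| ≤ 2, let 𝒜 = (Q, Γ, T, P, F) be a 𝒫-automaton with no transitions leading to an initial state, and let 𝒜_post* = (Q', Γ, T', P, F) be its post*-saturation. If (p,θ) —w→_{T'} q is a path of 𝒜_post* and q is a new state of the form q = q_{p1γ1}^{θ1}, then (⟨p1,γ1⟩, θ1) ⇒*_𝒫 (⟨p,w⟩, θ). -/

import Mathlib

/-- Rules of a self-modifying pushdown system (SM-PDS). -/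
inductive SMRule (P Γ : Type) : Type
  | basic : P → Γ → P → List Γ → SMRule P Γ
  | modif : P → SMRule P Γ → SMRule P Γ → P → SMRule P Γ

/-- A phase: a (current) set of rules. -/
abbrev Phase (P Γ : Type) := Set (SMRule P Γ)

/-- A configuration `(⟨p,w⟩, θ)` of an SM-PDS. -/
abbrev SMConf (P Γ : Type) := P × List Γ × Phase P Γ

/-- The transition relation `⇒_𝒫` of the SM-PDS `(P, Γ, Δ, Δc)`. -/
inductive SMStep {P Γ : Type} (Δ Δc : Set (SMRule P Γ)) : SMConf P Γ → SMConf P Γ → Prop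
  | basic {p γ p' w' w θ} :
      SMRule.basic p γ p' w' ∈ Δ → SMRule.basic p γ p' w' ∈ θ →
      SMStep Δ Δc (p, γ :: w, θ) (p', w' ++ w, θ)
  | modif {p r1 r2 p' w θ} :
      SMRule.modif p r1 r2 p' ∈ Δc → SMRule.modif p r1 r2 p' ∈ θ → r1 ∈ θ →
      SMStep Δ Δc (p, w, θ) (p', w, (θ \ {r1}) ∪ {r2})

/-- Paths `q —w→_T q'` (for `w ∈ Γ*`) in an automaton with transitions
`T ⊆ Q × (Γ ∪ {ε}) × Q` (`none` is the label ε). -/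
inductive APath {Q Γ : Type} (T : Set (Q × Option Γ × Q)) : Q → List Γ → Q → Prop
  | refl (q : Q) : APath T q [] q
  | eps {q q' q'' : Q} {w : List Γ} :
      (q, none, q') ∈ T → APath T q' w q'' → APath T q w q''
  | cons {q q' q'' : Q} {γ : Γ} {w : List Γ} :
      (q, some γ, q') ∈ T → APath T q' w q'' → APath T q (γ :: w) q''

/-- The states `Q'` of `𝒜_post*`: the states of `𝒜` (`Sum.inl`) together with
the fresh states `q_{p'γ1}^θ` (`Sum.inr (p', γ1, θ)`). -/
abbrev PostState (P Γ Q : Type) := Q ⊕ (P × Γ × Phase P Γ)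

/-- `S` is closed under the post*-saturation rules (β1)–(β4), where
`st p θ` denotes the initial state `(p,θ)` of the 𝒫-automaton. -/
def PostClosed {P Γ Q : Type} (Δ Δc : Set (SMRule P Γ)) (st : P → Phase P Γ → Q)
    (S : Set (PostState P Γ Q × Option Γ × PostState P Γ Q)) : Prop :=
  -- (β1)
  (∀ p γ p' θ q, SMRule.basic p γ p' [] ∈ Δ → θ ⊆ Δ ∪ Δc →
      SMRule.basic p γ p' [] ∈ θ →
      APath S (Sum.inl (st p θ)) [γ] q → (Sum.inl (st p' θ), none, q) ∈ S) ∧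
  -- (β2)
  (∀ p γ p' γ' θ q, SMRule.basic p γ p' [γ'] ∈ Δ → θ ⊆ Δ ∪ Δc →
      SMRule.basic p γ p' [γ'] ∈ θ →
      APath S (Sum.inl (st p θ)) [γ] q → (Sum.inl (st p' θ), some γ', q) ∈ S) ∧
  -- (β3)
  (∀ p γ p' γ1 γ2 θ q, SMRule.basic p γ p' [γ1, γ2] ∈ Δ → θ ⊆ Δ ∪ Δc →
      SMRule.basic p γ p' [γ1, γ2] ∈ θ →
      APath S (Sum.inl (st p θ)) [γ] q →
      (Sum.inl (st p' θ), some γ1, Sum.inr (p', γ1, θ)) ∈ S ∧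
      (Sum.inr (p', γ1, θ), some γ2, q) ∈ S) ∧
  -- (β4)
  (∀ p r1 r2 p' θ γ q, SMRule.modif p r1 r2 p' ∈ Δc → θ ⊆ Δ ∪ Δc →
      SMRule.modif p r1 r2 p' ∈ θ → r1 ∈ θ →
      APath S (Sum.inl (st p θ)) [γ] q →
      (Sum.inl (st p' ((θ \ {r1}) ∪ {r2})), some γ, q) ∈ S)

/-- The transitions of `𝒜` viewed as transitions over the states of `𝒜_post*`. -/
def liftT {Q Γ NS : Type} (T : Set (Q × Option Γ × Q)) :
    Set ((Q ⊕ NS) × Option Γ × (Q ⊕ NS)) :=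
  {t | ∃ q a q', (q, a, q') ∈ T ∧ t = (Sum.inl q, a, Sum.inl q')}

/-- The transitions `T'` of `𝒜_post*`: the smallest set containing (the lift
of) `T` and closed under the saturation rules (β1)–(β4). -/
def postStar {P Γ Q : Type} (Δ Δc : Set (SMRule P Γ)) (st : P → Phase P Γ → Q)
    (T : Set (Q × Option Γ × Q)) :
    Set (PostState P Γ Q × Option Γ × PostState P Γ Q) :=
  ⋂₀ {S | liftT T ⊆ S ∧ PostClosed Δ Δc st S}

section Aux

open Relation

variable {P Γ Q : Type} (Δ Δc : Set (SMRule P Γ)) (st : P → Phase P Γ → Q)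

/-- A single SM-PDS step is preserved by appending a word to the stack. -/
lemma smstep_append {c c' : SMConf P Γ} (h : SMStep Δ Δc c c') (v : List Γ) :
    SMStep Δ Δc (c.1, c.2.1 ++ v, c.2.2) (c'.1, c'.2.1 ++ v, c'.2.2) := by
  cases h with
  | @basic p γ p' w' w θ h1 h2 =>
      have := SMStep.basic (Δ := Δ) (Δc := Δc) (w := w ++ v) h1 h2
      simpa [List.append_assoc] using this
  | modif h1 h2 h3 => exact SMStep.modif ‹_› ‹_› ‹_›

/-- Multi-step version of `smstep_append`. -/
lemma smrtg_append {c c' : SMConf P Γ}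
    (h : Relation.ReflTransGen (SMStep Δ Δc) c c') (v : List Γ) :
    Relation.ReflTransGen (SMStep Δ Δc)
      (c.1, c.2.1 ++ v, c.2.2) (c'.1, c'.2.1 ++ v, c'.2.2) := by
  induction h with
  | refl => exact .refl
  | tail _ hs ih => exact ih.tail (smstep_append Δ Δc hs v)

/-- A state of `𝒜_post*` is initial if it is `(p,θ)` for some `p`, `θ`. -/
def IsInit (s : PostState P Γ Q) : Prop := ∃ p θ, s = Sum.inl (st p θ)

/-- The soundness invariant for a single transition of `𝒜_post*`. -/
def Good (t : PostState P Γ Q × Option Γ × PostState P Γ Q) : Prop :=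
  (¬ IsInit st t.2.2) ∧
  (∀ p θ, t.1 = Sum.inl (st p θ) → ∀ p1 γ1 θ1, t.2.2 = Sum.inr (p1, γ1, θ1) →
      Relation.ReflTransGen (SMStep Δ Δc) (p1, [γ1], θ1)
        (p, t.2.1.elim [] (fun b => [b]), θ)) ∧
  (∀ p2 γ2 θ2, t.1 = Sum.inr (p2, γ2, θ2) →
      ∃ b, t.2.1 = some b ∧ ∀ p1 γ1 θ1, t.2.2 = Sum.inr (p1, γ1, θ1) →
        Relation.ReflTransGen (SMStep Δ Δc) (p1, [γ1], θ1) (p2, [γ2, b], θ2)) ∧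
  (∀ q2, t.1 = Sum.inl q2 → ¬ IsInit st t.1 → ∃ q3, t.2.2 = Sum.inl q3)

/-- The soundness invariant for paths of `𝒜_post*`. -/
def PathGood (s : PostState P Γ Q) (w : List Γ) (q : PostState P Γ Q) : Prop :=
  ((∃ q2, s = Sum.inl q2) → ¬ IsInit st s → (∃ q3, q = Sum.inl q3) ∧ ¬ IsInit st q) ∧
  ((∃ x, s = Sum.inr x) → ¬ IsInit st q) ∧
  (∀ p θ, s = Sum.inl (st p θ) → w ≠ [] → ¬ IsInit st q) ∧
  (∀ p θ, s = Sum.inl (st p θ) → ∀ p1 γ1 θ1, q = Sum.inr (p1, γ1, θ1) →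
      Relation.ReflTransGen (SMStep Δ Δc) (p1, [γ1], θ1) (p, w, θ)) ∧
  (∀ p2 γ2 θ2, s = Sum.inr (p2, γ2, θ2) → ∀ p1 γ1 θ1, q = Sum.inr (p1, γ1, θ1) →
      Relation.ReflTransGen (SMStep Δ Δc) (p1, [γ1], θ1) (p2, γ2 :: w, θ2))

lemma not_isInit_inr (x : P × Γ × Phase P Γ) : ¬ IsInit st (Sum.inr x : PostState P Γ Q) := by
  rintro ⟨p, θ, h⟩; simp at h

/-- Every path all of whose transitions satisfy `Good` satisfies `PathGood`. -/
lemma path_good {S : Set (PostState P Γ Q × Option Γ × PostState P Γ Q)}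
    (hS : ∀ t ∈ S, Good Δ Δc st t) {s : PostState P Γ Q} {w : List Γ}
    {q : PostState P Γ Q} (h : APath S s w q) :
    PathGood Δ Δc st s w q := by
  induction h with
  | refl q =>
      refine ⟨fun h hni => ⟨h, hni⟩, ?_, fun _ _ _ h => absurd rfl h, ?_, ?_⟩
      · rintro ⟨x, rfl⟩; exact not_isInit_inr st x
      · rintro p θ rfl p1 γ1 θ1 h; simp at h
      · rintro p2 γ2 θ2 rfl p1 γ1 θ1 h
        obtain ⟨h1, h2, h3⟩ : p2 = p1 ∧ γ2 = γ1 ∧ θ2 = θ1 := by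
          have := Sum.inr.inj h; exact ⟨congrArg Prod.fst this,
            congrArg (fun y => y.2.1) this, congrArg (fun y => y.2.2) this⟩
        subst h1; subst h2; subst h3; exact .refl
  | @eps s s' q w ht hp ih =>
      have G := hS _ ht
      have G1 : ¬ IsInit st s' := G.1
      refine ⟨?_, ?_, ?_, ?_, ?_⟩
      · rintro ⟨q2, rfl⟩ hni
        obtain ⟨q3, hq3⟩ := G.2.2.2 q2 rfl hni
        have hq3' : s' = Sum.inl q3 := hq3
        exact ih.1 ⟨q3, hq3'⟩ (hq3' ▸ G1)
      · rintro ⟨x, rfl⟩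
        obtain ⟨b, hb, -⟩ := G.2.2.1 x.1 x.2.1 x.2.2 rfl
        exact absurd hb (by simp)
      · rintro p θ rfl hw
        cases hs' : s' with
        | inl q3 => exact (ih.1 ⟨q3, hs'⟩ (hs' ▸ G1)).2
        | inr x => exact ih.2.1 ⟨x, hs'⟩
      · rintro p θ rfl p1 γ1 θ1 rfl
        cases hs' : s' with
        | inl q3 =>
            obtain ⟨q4, hq4⟩ := (ih.1 ⟨q3, hs'⟩ (hs' ▸ G1)).1
            simp at hq4
        | inr x =>
            obtain ⟨p2, γ2, θ2⟩ := x
            have h1 := G.2.1 p θ rfl p2 γ2 θ2 hs'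
            have h2 := ih.2.2.2.2 p2 γ2 θ2 hs' p1 γ1 θ1 rfl
            have h3 := smrtg_append Δ Δc h1 w
            simpa using h2.trans (by simpa using h3)
      · rintro p2 γ2 θ2 rfl p1 γ1 θ1 rfl
        obtain ⟨b, hb, -⟩ := G.2.2.1 p2 γ2 θ2 rfl
        exact absurd hb (by simp)
  | @cons s s' q γ w ht hp ih =>
      have G := hS _ ht
      have G1 : ¬ IsInit st s' := G.1
      refine ⟨?_, ?_, ?_, ?_, ?_⟩
      · rintro ⟨q2, rfl⟩ hni
        obtain ⟨q3, hq3⟩ := G.2.2.2 q2 rfl hni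
        have hq3' : s' = Sum.inl q3 := hq3
        exact ih.1 ⟨q3, hq3'⟩ (hq3' ▸ G1)
      · rintro ⟨x, rfl⟩
        cases hs' : s' with
        | inl q3 => exact (ih.1 ⟨q3, hs'⟩ (hs' ▸ G1)).2
        | inr y => exact ih.2.1 ⟨y, hs'⟩
      · rintro p θ rfl hw
        cases hs' : s' with
        | inl q3 => exact (ih.1 ⟨q3, hs'⟩ (hs' ▸ G1)).2
        | inr x => exact ih.2.1 ⟨x, hs'⟩
      · rintro p θ rfl p1 γ1 θ1 rfl
        cases hs' : s' with
        | inl q3 =>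
            obtain ⟨q4, hq4⟩ := (ih.1 ⟨q3, hs'⟩ (hs' ▸ G1)).1
            simp at hq4
        | inr x =>
            obtain ⟨p2, γ2, θ2⟩ := x
            have h1 := G.2.1 p θ rfl p2 γ2 θ2 hs'
            have h2 := ih.2.2.2.2 p2 γ2 θ2 hs' p1 γ1 θ1 rfl
            have h3 := smrtg_append Δ Δc h1 w
            exact h2.trans (by simpa using h3)
      · rintro p2 γ2 θ2 rfl p1 γ1 θ1 rfl
        obtain ⟨b, hb, hR⟩ := G.2.2.1 p2 γ2 θ2 rfl
        obtain rfl : γ = b := Option.some.inj hb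
        cases hs' : s' with
        | inl q3 =>
            obtain ⟨q4, hq4⟩ := (ih.1 ⟨q3, hs'⟩ (hs' ▸ G1)).1
            simp at hq4
        | inr x =>
            obtain ⟨p3, γ3, θ3⟩ := x
            have h1 := hR p3 γ3 θ3 hs'
            have h2 := ih.2.2.2.2 p3 γ3 θ3 hs' p1 γ1 θ1 rfl
            have h3 := smrtg_append Δ Δc h1 w
            exact h2.trans (by simpa using h3)

/-- The lift of the original transitions satisfies the invariant. -/
lemma liftT_good (T : Set (Q × Option Γ × Q))
    (hnoinit : ∀ q a p θ, (q, a, st p θ) ∉ T) :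
    liftT T ⊆ {t | Good Δ Δc st t} := by
  rintro t ⟨q, a, q', hT, rfl⟩
  refine ⟨?_, ?_, ?_, ?_⟩
  · rintro ⟨p, θ, hq⟩
    obtain rfl : q' = st p θ := Sum.inl.inj hq
    exact hnoinit q a p θ hT
  · rintro p θ h p1 γ1 θ1 h'; simp at h'
  · rintro p2 γ2 θ2 h; simp at h
  · rintro q2 h hni; exact ⟨q', rfl⟩

/-- The set of transitions satisfying the invariant is closed under
(β1)–(β4). -/
lemma good_closed (hst : Function.Injective fun x : P × Phase P Γ => st x.1 x.2) :
    PostClosed Δ Δc st {t | Good Δ Δc st t} := by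
  have hSt : ∀ {p p' : P} {θ θ' : Phase P Γ}, st p θ = st p' θ' → p = p' ∧ θ = θ' := by
    intro p p' θ θ' h
    have := hst (a₁ := (p, θ)) (a₂ := (p', θ')) h
    exact ⟨congrArg Prod.fst this, congrArg Prod.snd this⟩
  refine ⟨?_, ?_, ?_, ?_⟩
  · -- β1
    intro p γ p' θ q hΔ hθ hθm hpth
    have PG := path_good Δ Δc st (fun t ht => ht) hpth
    refine ⟨PG.2.2.1 p θ rfl (by simp), ?_, ?_, ?_⟩
    · rintro p0 θ0 h0 p1 γ1 θ1 rfl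
      obtain ⟨hp0, hθ0⟩ := hSt (Sum.inl.inj h0).symm
      rw [hp0, hθ0]
      have h1 := PG.2.2.2.1 p θ rfl p1 γ1 θ1 rfl
      have h2 : SMStep Δ Δc (p, [γ], θ) (p', [], θ) := by
        simpa using SMStep.basic (w := []) hΔ hθm
      exact h1.tail h2
    · rintro p2 γ2 θ2 h; simp at h
    · rintro q2 h hni; exact absurd ⟨p', θ, rfl⟩ hni
  · -- β2
    intro p γ p' γ' θ q hΔ hθ hθm hpth
    have PG := path_good Δ Δc st (fun t ht => ht) hpth
    refine ⟨PG.2.2.1 p θ rfl (by simp), ?_, ?_, ?_⟩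
    · rintro p0 θ0 h0 p1 γ1 θ1 rfl
      obtain ⟨hp0, hθ0⟩ := hSt (Sum.inl.inj h0).symm
      rw [hp0, hθ0]
      have h1 := PG.2.2.2.1 p θ rfl p1 γ1 θ1 rfl
      have h2 : SMStep Δ Δc (p, [γ], θ) (p', [γ'], θ) := by
        simpa using SMStep.basic (w := []) hΔ hθm
      exact h1.tail h2
    · rintro p2 γ2 θ2 h; simp at h
    · rintro q2 h hni; exact absurd ⟨p', θ, rfl⟩ hni
  · -- β3
    intro p γ p' γ1' γ2' θ q hΔ hθ hθm hpth
    have PG := path_good Δ Δc st (fun t ht => ht) hpth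
    constructor
    · refine ⟨not_isInit_inr st _, ?_, ?_, ?_⟩
      · rintro p0 θ0 h0 p1 γ1 θ1 h1
        obtain ⟨hp0, hθ0⟩ := hSt (Sum.inl.inj h0).symm
        rw [hp0, hθ0]
        obtain ⟨ha, hb, hc⟩ : p' = p1 ∧ γ1' = γ1 ∧ θ = θ1 := by
          have := Sum.inr.inj h1; exact ⟨congrArg Prod.fst this,
            congrArg (fun y => y.2.1) this, congrArg (fun y => y.2.2) this⟩
        rw [← ha, ← hb, ← hc]
        exact Relation.ReflTransGen.refl
      · rintro p2 γ2 θ2 h; simp at h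
      · rintro q2 h hni; exact absurd ⟨p', θ, rfl⟩ hni
    · refine ⟨PG.2.2.1 p θ rfl (by simp), ?_, ?_, ?_⟩
      · rintro p0 θ0 h; simp at h
      · rintro p2 γ2 θ2 h2
        obtain ⟨ha, hb, hc⟩ : p2 = p' ∧ γ2 = γ1' ∧ θ2 = θ := by
          have := (Sum.inr.inj h2).symm; exact ⟨congrArg Prod.fst this,
            congrArg (fun y => y.2.1) this, congrArg (fun y => y.2.2) this⟩
        rw [ha, hb, hc]
        refine ⟨γ2', rfl, ?_⟩
        rintro p1 γ1 θ1 rfl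
        have h1 := PG.2.2.2.1 p θ rfl p1 γ1 θ1 rfl
        have h2 : SMStep Δ Δc (p, [γ], θ) (p', [γ1', γ2'], θ) := by
          simpa using SMStep.basic (w := []) hΔ hθm
        exact h1.tail h2
      · rintro q2 h; simp at h
  · -- β4
    intro p r1 r2 p' θ γ q hΔc hθ hθm hr1 hpth
    have PG := path_good Δ Δc st (fun t ht => ht) hpth
    refine ⟨PG.2.2.1 p θ rfl (by simp), ?_, ?_, ?_⟩
    · rintro p0 θ0 h0 p1 γ1 θ1 rfl
      obtain ⟨hp0, hθ0⟩ := hSt (Sum.inl.inj h0).symm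
      rw [hp0, hθ0]
      have h1 := PG.2.2.2.1 p θ rfl p1 γ1 θ1 rfl
      exact h1.tail (SMStep.modif hΔc hθm hr1)
    · rintro p2 γ2 θ2 h; simp at h
    · rintro q2 h hni; exact absurd ⟨p', _, rfl⟩ hni

end Aux

/-- if `(p,θ) —w→_{T'} q` is a path of `𝒜_post*` with `q` a new
state `q_{p1γ1}^{θ1}`, then `(⟨p1,γ1⟩,θ1) ⇒*_𝒫 (⟨p,w⟩,θ)`. -/
theorem post_star_sound_new_state {P Γ Q : Type}
    (Δ Δc : Set (SMRule P Γ))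
    (hΔbasic : ∀ r ∈ Δ, ∃ p γ p' w, r = SMRule.basic p γ p' w)
    (hΔcmodif : ∀ r ∈ Δc, ∃ p r1 r2 p',
        r = SMRule.modif p r1 r2 p' ∧ r1 ∈ Δ ∪ Δc ∧ r2 ∈ Δ ∪ Δc)
    -- every rule of Δ pushes a word of length at most 2
    (hlen : ∀ p γ p' w, SMRule.basic p γ p' w ∈ Δ → w.length ≤ 2)
    -- the 𝒫-automaton 𝒜 = (Q, Γ, T, P, F): initial states `st p θ`
    (st : P → Phase P Γ → Q)
    (hst : Function.Injective fun x : P × Phase P Γ => st x.1 x.2)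
    (T : Set (Q × Option Γ × Q)) (F : Set Q)
    -- no transitions lead to an initial state
    (hnoinit : ∀ q a p θ, (q, a, st p θ) ∉ T)
    (p : P) (w : List Γ) (θ : Phase P Γ) (hθ : θ ⊆ Δ ∪ Δc)
    (p1 : P) (γ1 : Γ) (θ1 : Phase P Γ)
    (hpath : APath (postStar Δ Δc st T) (Sum.inl (st p θ)) w
        (Sum.inr (p1, γ1, θ1))) :
    Relation.ReflTransGen (SMStep Δ Δc) (p1, [γ1], θ1) (p, w, θ) := by
  have hsub : postStar Δ Δc st T ⊆ {t | Good Δ Δc st t} :=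
    Set.sInter_subset_of_mem ⟨liftT_good Δ Δc st T hnoinit, good_closed Δ Δc st hst⟩
  have PG := path_good Δ Δc st (fun t ht => hsub ht) hpath
  exact PG.2.2.2.1 p θ rfl p1 γ1 θ1 rfl
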